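/- The autonomous domination number of the path P_n on n vertices is n − 2, for all n ≥ 4. -/

import Mathlib

open SimpleGraph

variable {V : Type*} [DecidableEq V]

/-- `S` is a dominating set of `G`. -/
def Dominates (G : SimpleGraph V) (S : Finset V) : Prop :=
  ∀ v : V, v ∈ S ∨ ∃ u ∈ S, G.Adj u v

/-- Dominating sets `S` and `S'` are adjacent: they differ by moving one
guard along an edge of `G`. -/
def AdjacentSets (G : SimpleGraph V) (S S' : Finset V) : Prop :=
  ∃ v v', v ∈ S ∧ v' ∉ S ∧ G.Adj v v' ∧ S' = insert v' (S.erase v)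

/-- `S` is a secure dominating set. -/
def SecureDominating (G : SimpleGraph V) (S : Finset V) : Prop :=
  Dominates G S ∧ ∀ v ∉ S, ∃ S', Dominates G S' ∧ AdjacentSets G S S' ∧ v ∈ S'

/-- An autonomously dominating family. -/
def AutFamily (G : SimpleGraph V) (F : Set (Finset V)) : Prop :=
  (∀ S ∈ F, Dominates G S) ∧
  (∀ S ∈ F, ∀ v ∉ S, ∃ S' ∈ F, AdjacentSets G S S' ∧ v ∈ S') ∧
  (∀ S ∈ F, ∀ S', Dominates G S' → AdjacentSets G S S' → S' ∈ F)

/-- An autonomously dominating set. -/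
def AutDomSet (G : SimpleGraph V) (S : Finset V) : Prop :=
  ∃ F, AutFamily G F ∧ S ∈ F

/-- The autonomous domination number. -/
noncomputable def autDomNum (G : SimpleGraph V) : ℕ :=
  sInf {k | ∃ S : Finset V, AutDomSet G S ∧ S.card = k}

/-- An eternally dominating family (no closure condition). -/
def EternalFamily (G : SimpleGraph V) (F : Set (Finset V)) : Prop :=
  (∀ S ∈ F, Dominates G S) ∧
  (∀ S ∈ F, ∀ v ∉ S, ∃ S' ∈ F, AdjacentSets G S S' ∧ v ∈ S')

/-- The eternal domination number. -/
noncomputable def eternalDomNum (G : SimpleGraph V) : ℕ :=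
  sInf {k | ∃ (F : Set (Finset V)) (S : Finset V),
    EternalFamily G F ∧ S ∈ F ∧ S.card = k}

/-- The domination number. -/
noncomputable def domNum (G : SimpleGraph V) : ℕ :=
  sInf {k | ∃ S : Finset V, Dominates G S ∧ S.card = k}

lemma adj_card (G : SimpleGraph V) {S S' : Finset V} (h : AdjacentSets G S S') :
    S'.card = S.card := by
  obtain ⟨v, v', hv, hv', _, rfl⟩ := h
  rw [Finset.card_insert_of_notMem (fun hc => hv' (Finset.mem_of_mem_erase hc)),
    Finset.card_erase_of_mem hv]
  have : 1 ≤ S.card := Finset.card_pos.2 ⟨v, hv⟩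
  omega

lemma find_nbr {n : ℕ} (hn : 4 ≤ n) {c d : ℕ} (hc : c < n) (hd : d < n) (hcd : c ≠ d)
    (h1 : ¬(c ≤ 1 ∧ d ≤ 1)) (h2 : ¬(n ≤ c + 2 ∧ n ≤ d + 2)) :
    ∃ e, e < n ∧ e ≠ c ∧ e ≠ d ∧ (e + 1 = c ∨ c + 1 = e) := by
  by_cases h0 : c = 0
  · exact ⟨1, by omega, by omega, by omega, by omega⟩
  by_cases htop : c + 1 = n
  · exact ⟨c - 1, by omega, by omega, by omega, by omega⟩
  by_cases hdl : d + 1 = c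
  · exact ⟨c + 1, by omega, by omega, by omega, by omega⟩
  · exact ⟨c - 1, by omega, by omega, by omega, by omega⟩

lemma dom_pair {n : ℕ} (hn : 4 ≤ n) (a b : Fin n) (hab : a ≠ b)
    (h1 : ¬((a : ℕ) ≤ 1 ∧ (b : ℕ) ≤ 1)) (h2 : ¬(n ≤ (a : ℕ) + 2 ∧ n ≤ (b : ℕ) + 2)) :
    Dominates (pathGraph n) (Finset.univ \ {a, b}) := by
  intro v
  by_cases hv : v ∈ Finset.univ \ {a, b}
  · exact Or.inl hv
  right
  have hvab : v = a ∨ v = b := by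
    simp only [Finset.mem_sdiff, Finset.mem_univ, true_and, Finset.mem_insert,
      Finset.mem_singleton, not_not] at hv
    exact hv
  have hab' : (a : ℕ) ≠ (b : ℕ) := fun h => hab (Fin.ext h)
  rcases hvab with rfl | rfl
  · obtain ⟨e, he, hea, heb, hadj⟩ := find_nbr hn v.isLt b.isLt hab' h1 h2
    refine ⟨⟨e, he⟩, ?_, ?_⟩
    · simp only [Finset.mem_sdiff, Finset.mem_univ, true_and, Finset.mem_insert,
        Finset.mem_singleton]
      push_neg
      exact ⟨fun h => hea (by simpa [Fin.ext_iff] using h),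
             fun h => heb (by simpa [Fin.ext_iff] using h)⟩
    · rw [pathGraph_adj]; simpa using hadj
  · obtain ⟨e, he, hea, heb, hadj⟩ := find_nbr hn v.isLt a.isLt (Ne.symm hab')
      (by omega) (by omega)
    refine ⟨⟨e, he⟩, ?_, ?_⟩
    · simp only [Finset.mem_sdiff, Finset.mem_univ, true_and, Finset.mem_insert,
        Finset.mem_singleton]
      push_neg
      exact ⟨fun h => heb (by simpa [Fin.ext_iff] using h),
             fun h => hea (by simpa [Fin.ext_iff] using h)⟩
    · rw [pathGraph_adj]; simpa using hadj

lemma top_guard {n : ℕ} (hn : 2 ≤ n) {S : Finset (Fin n)}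
    (hd : Dominates (pathGraph n) S) (h : (⟨n - 1, by omega⟩ : Fin n) ∉ S) :
    (⟨n - 2, by omega⟩ : Fin n) ∈ S := by
  rcases hd ⟨n - 1, by omega⟩ with h' | ⟨u, hu, hadj⟩
  · exact absurd h' h
  · rw [pathGraph_adj] at hadj
    simp only [Fin.val_mk] at hadj
    have : u = ⟨n - 2, by omega⟩ := Fin.ext (by have := u.isLt; simp; omega)
    rwa [← this]

lemma bot_guard {n : ℕ} (hn : 2 ≤ n) {S : Finset (Fin n)}
    (hd : Dominates (pathGraph n) S) (h : (⟨0, by omega⟩ : Fin n) ∉ S) :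
    (⟨1, by omega⟩ : Fin n) ∈ S := by
  rcases hd ⟨0, by omega⟩ with h' | ⟨u, hu, hadj⟩
  · exact absurd h' h
  · rw [pathGraph_adj] at hadj
    simp only [Fin.val_mk] at hadj
    have : u = ⟨1, by omega⟩ := Fin.ext (by simp; omega)
    rwa [← this]

lemma secure_choice {n : ℕ} (hn : 4 ≤ n) {v w : ℕ} (hv : v < n) (hw : w < n) (hvw : v ≠ w)
    (h1 : ¬(v ≤ 1 ∧ w ≤ 1)) (h2 : ¬(n ≤ v + 2 ∧ n ≤ w + 2)) :
    ∃ x, x < n ∧ x ≠ v ∧ x ≠ w ∧ (x + 1 = v ∨ v + 1 = x) ∧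
      ¬(w ≤ 1 ∧ x ≤ 1) ∧ ¬(n ≤ w + 2 ∧ n ≤ x + 2) := by
  by_cases h0 : v = 0
  · exact ⟨1, by omega, by omega, by omega, by omega, by omega, by omega⟩
  by_cases htop : v + 1 = n
  · exact ⟨n - 2, by omega, by omega, by omega, by omega, by omega, by omega⟩
  by_cases hwl : w + 1 = v
  · exact ⟨v + 1, by omega, by omega, by omega, by omega, by omega, by omega⟩
  by_cases hwr : w = v + 1
  · exact ⟨v - 1, by omega, by omega, by omega, by omega, by omega, by omega⟩
  by_cases hws : w ≤ 1
  · exact ⟨v + 1, by omega, by omega, by omega, by omega, by omega, by omega⟩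
  · exact ⟨v - 1, by omega, by omega, by omega, by omega, by omega, by omega⟩

lemma move_pair {n : ℕ} {S : Finset (Fin n)} {v w x : Fin n}
    (hS : ∀ u : Fin n, u ∈ S ↔ (u ≠ v ∧ u ≠ w))
    (hvw : v ≠ w) (hvx : v ≠ x) (hwx : w ≠ x) :
    insert v (S.erase x) = Finset.univ \ {w, x} := by
  ext u
  simp only [Finset.mem_insert, Finset.mem_erase, hS, Finset.mem_sdiff, Finset.mem_univ,
    true_and, Finset.mem_singleton]
  constructor
  · rintro (rfl | ⟨hux, huv, huw⟩)
    · simp [hvw, hvx]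
    · simp [huw, hux]
  · intro h
    push_neg at h
    by_cases huv : u = v
    · exact Or.inl huv
    · exact Or.inr ⟨h.2, huv, h.1⟩

lemma slide_one {n : ℕ} {T : Finset (Fin n)} (hd : Dominates (pathGraph n) T)
    {q : ℕ} (hq1 : q + 1 < n)
    (hq : (⟨q, by omega⟩ : Fin n) ∉ T) (hq1T : (⟨q + 1, hq1⟩ : Fin n) ∈ T)
    (hside : ∀ _ : q + 2 < n,
      (∃ h2 : q + 2 < n, (⟨q + 2, h2⟩ : Fin n) ∈ T) ∨
      (∃ h3 : q + 3 < n, (⟨q + 3, h3⟩ : Fin n) ∈ T)) :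
    Dominates (pathGraph n) (insert ⟨q, by omega⟩ (T.erase ⟨q + 1, hq1⟩)) := by
  intro u
  by_cases hu : u ∈ T
  · by_cases he : u = ⟨q + 1, hq1⟩
    · right
      refine ⟨⟨q, by omega⟩, Finset.mem_insert_self _ _, ?_⟩
      rw [pathGraph_adj]
      left
      simp [he]
    · left
      exact Finset.mem_insert_of_mem (Finset.mem_erase.2 ⟨he, hu⟩)
  · by_cases hq' : u = ⟨q, by omega⟩
    · left; simp [hq']
    · rcases hd u with h | ⟨x, hx, hadj⟩
      · exact absurd h hu
      right
      by_cases hxe : x = ⟨q + 1, hq1⟩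
      · subst hxe
        rw [pathGraph_adj] at hadj
        simp only [Fin.val_mk] at hadj
        have huv : (u : ℕ) = q + 2 := by
          rcases hadj with h | h
          · omega
          · exact absurd (Fin.ext (by simp; omega)) hq'
        have h2 : q + 2 < n := huv ▸ u.isLt
        rcases hside h2 with ⟨h2', hg⟩ | ⟨h3, hg⟩
        · exact absurd (show u ∈ T from by
            have : u = ⟨q + 2, h2'⟩ := Fin.ext (by simpa using huv)
            rwa [this]) hu
        · refine ⟨⟨q + 3, h3⟩, Finset.mem_insert_of_mem (Finset.mem_erase.2
            ⟨by simp [Fin.ext_iff], hg⟩), ?_⟩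
          rw [pathGraph_adj]
          simp only [Fin.val_mk]
          omega
      · exact ⟨x, Finset.mem_insert_of_mem (Finset.mem_erase.2 ⟨hxe, hx⟩), hadj⟩

lemma slide {n : ℕ} {F : Set (Finset (Fin n))} (hF : AutFamily (pathGraph n) F)
    {t : ℕ} (ht : t < n) :
    ∀ (d q : ℕ) (T : Finset (Fin n)) (_ : T ∈ F) (_ : Dominates (pathGraph n) T)
    (hqt : q ≤ t) (_ : t - q ≤ d) (_ : (⟨q, by omega⟩ : Fin n) ∉ T),
    ∀ (_ : ∀ j (hj : j < n), q < j → j ≤ t → (⟨j, hj⟩ : Fin n) ∈ T)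
    (_ : ∀ _ : t + 1 < n, (∃ h1 : t + 1 < n, (⟨t + 1, h1⟩ : Fin n) ∈ T) ∨
       (∃ h2 : t + 2 < n, (⟨t + 2, h2⟩ : Fin n) ∈ T)),
    ∃ T₁ ∈ F, Dominates (pathGraph n) T₁ ∧ T₁.card = T.card ∧
      (∀ j (hj : j < n), j < q → ((⟨j, hj⟩ : Fin n) ∈ T₁ ↔ (⟨j, hj⟩ : Fin n) ∈ T)) ∧
      (∀ j (hj : j < n), q ≤ j → j < t → (⟨j, hj⟩ : Fin n) ∈ T₁) ∧
      ((⟨t, ht⟩ : Fin n) ∉ T₁) ∧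
      (∀ j (hj : j < n), t < j → ((⟨j, hj⟩ : Fin n) ∈ T₁ ↔ (⟨j, hj⟩ : Fin n) ∈ T)) := by
  intro d
  induction d with
  | zero =>
    intro q T hTF hdom hqt hdq hq hguard hside
    have hq' : q = t := by omega
    subst hq'
    exact ⟨T, hTF, hdom, rfl, fun j hj _ => Iff.rfl,
      fun j hj h1 h2 => by omega, hq, fun j hj _ => Iff.rfl⟩
  | succ d ih =>
    intro q T hTF hdom hqt hdq hq hguard hside
    by_cases hq' : q = t
    · subst hq'
      exact ⟨T, hTF, hdom, rfl, fun j hj _ => Iff.rfl,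
        fun j hj h1 h2 => by omega, hq, fun j hj _ => Iff.rfl⟩
    have hqlt : q < t := by omega
    have hq1n : q + 1 < n := by omega
    have hx : (⟨q + 1, hq1n⟩ : Fin n) ∈ T := hguard (q + 1) hq1n (by omega) (by omega)
    set T' : Finset (Fin n) := insert ⟨q, by omega⟩ (T.erase ⟨q + 1, hq1n⟩) with hT'def
    have hmemT' : ∀ (j : ℕ) (hj : j < n),
        ((⟨j, hj⟩ : Fin n) ∈ T' ↔ (j = q ∨ (j ≠ q + 1 ∧ (⟨j, hj⟩ : Fin n) ∈ T))) := by
      intro j hj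
      simp [hT'def, Finset.mem_insert, Finset.mem_erase, Fin.ext_iff]
    have hadj : AdjacentSets (pathGraph n) T T' := by
      refine ⟨⟨q + 1, hq1n⟩, ⟨q, by omega⟩, hx, hq, ?_, rfl⟩
      rw [pathGraph_adj]
      simp
    have hdom' : Dominates (pathGraph n) T' := by
      refine slide_one hdom hq1n hq hx ?_
      intro h2
      by_cases hc : q + 2 ≤ t
      · exact Or.inl ⟨h2, hguard (q + 2) h2 (by omega) hc⟩
      · have he : q + 2 = t + 1 := by omega
        rcases hside (by omega) with ⟨h1', hg⟩ | ⟨h2', hg⟩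
        · refine Or.inl ⟨h2, ?_⟩
          have : (⟨q + 2, h2⟩ : Fin n) = ⟨t + 1, h1'⟩ := Fin.ext (by simpa using he)
          rwa [this]
        · refine Or.inr ⟨by omega, ?_⟩
          have : (⟨q + 3, by omega⟩ : Fin n) = ⟨t + 2, h2'⟩ := Fin.ext (by simp; omega)
          rwa [this]
    have hT'F : T' ∈ F := hF.2.2 T hTF T' hdom' hadj
    have hq'notT' : (⟨q + 1, by omega⟩ : Fin n) ∉ T' := by
      rw [hmemT']
      push_neg
      exact ⟨by omega, fun h => absurd rfl h⟩
    obtain ⟨T₁, hT₁F, hd₁, hc₁, hlow, hmid, htop, hhigh⟩ :=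
      ih (q + 1) T' hT'F hdom' (by omega) (by omega) hq'notT'
        (fun j hj h1 h2 => (hmemT' j hj).2 (Or.inr ⟨by omega, hguard j hj (by omega) h2⟩))
        (fun h1 => by
          rcases hside h1 with ⟨h1', hg⟩ | ⟨h2', hg⟩
          · exact Or.inl ⟨h1', (hmemT' _ h1').2 (Or.inr ⟨by omega, hg⟩)⟩
          · exact Or.inr ⟨h2', (hmemT' _ h2').2 (Or.inr ⟨by omega, hg⟩)⟩)
    refine ⟨T₁, hT₁F, hd₁, by rw [hc₁, adj_card _ hadj], ?_, ?_, htop, ?_⟩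
    · intro j hj hjq
      rw [hlow j hj (by omega), hmemT' j hj]
      constructor
      · rintro (h | ⟨_, h⟩)
        · omega
        · exact h
      · intro h
        exact Or.inr ⟨by omega, h⟩
    · intro j hj h1 h2
      by_cases hjq : j = q
      · rw [hlow j hj (by omega), hmemT' j hj]
        exact Or.inl hjq
      · exact hmid j hj (by omega) h2
    · intro j hj hjt
      rw [hhigh j hj hjt, hmemT' j hj]
      constructor
      · rintro (h | ⟨_, h⟩)
        · omega
        · exact h
      · intro h
        exact Or.inr ⟨by omega, h⟩

lemma upper (n : ℕ) (hn : 4 ≤ n) :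
    ∃ S : Finset (Fin n), AutDomSet (pathGraph n) S ∧ S.card = n - 2 := by
  classical
  set F : Set (Finset (Fin n)) :=
    {S | Dominates (pathGraph n) S ∧ S.card = n - 2} with hFdef
  -- witness
  have h02 : (⟨0, by omega⟩ : Fin n) ≠ ⟨2, by omega⟩ := by simp [Fin.ext_iff]
  have hcard2 : ({(⟨0, by omega⟩ : Fin n), ⟨2, by omega⟩} : Finset (Fin n)).card = 2 := by
    rw [Finset.card_insert_of_notMem (by simp [Fin.ext_iff]), Finset.card_singleton]
  refine ⟨Finset.univ \ {⟨0, by omega⟩, ⟨2, by omega⟩}, ⟨F, ⟨?_, ?_, ?_⟩, ?_, ?_⟩, ?_⟩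
  · exact fun S hS => hS.1
  · -- condition (2)
    rintro S ⟨hSdom, hScard⟩ v hv
    have hcompl : Sᶜ.card = 2 := by
      rw [Finset.card_compl, hScard]
      simp only [Fintype.card_fin]
      omega
    obtain ⟨x, y, hxy, hxyeq⟩ := Finset.card_eq_two.1 hcompl
    have hvc : v ∈ Sᶜ := Finset.mem_compl.2 hv
    rw [hxyeq] at hvc
    simp only [Finset.mem_insert, Finset.mem_singleton] at hvc
    obtain ⟨w, hvw, hSc⟩ : ∃ w : Fin n, v ≠ w ∧ Sᶜ = {v, w} := by
      rcases hvc with rfl | rfl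
      · exact ⟨y, hxy, hxyeq⟩
      · exact ⟨x, Ne.symm hxy, by rw [hxyeq]; exact Finset.pair_comm x v⟩
    have hmemS : ∀ u : Fin n, u ∈ S ↔ (u ≠ v ∧ u ≠ w) := by
      intro u
      rw [← Finset.notMem_compl, hSc]
      simp [not_or]
    have hvw' : (v : ℕ) ≠ (w : ℕ) := fun h => hvw (Fin.ext h)
    -- converse facts
    have h1S : ¬((v : ℕ) ≤ 1 ∧ (w : ℕ) ≤ 1) := by
      rintro ⟨ha, hb⟩
      have h0 : (⟨0, by omega⟩ : Fin n) ∉ S := by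
        rw [hmemS]
        push_neg
        by_cases hv0 : (v : ℕ) = 0
        · intro h; exact absurd (Fin.ext (by simp [hv0])) h
        · intro _; exact Fin.ext (by simp; omega)
      have h1 := bot_guard (by omega) hSdom h0
      obtain ⟨hne1, hne2⟩ := (hmemS _).1 h1
      have e1 : ¬ ((1 : ℕ) = (v : ℕ)) := fun h => hne1 (Fin.ext (by simpa using h))
      have e2 : ¬ ((1 : ℕ) = (w : ℕ)) := fun h => hne2 (Fin.ext (by simpa using h))
      omega
    have h2S : ¬(n ≤ (v : ℕ) + 2 ∧ n ≤ (w : ℕ) + 2) := by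
      rintro ⟨ha, hb⟩
      have hvlt := v.isLt
      have hwlt := w.isLt
      have h0 : (⟨n - 1, by omega⟩ : Fin n) ∉ S := by
        rw [hmemS]
        push_neg
        by_cases hv0 : (v : ℕ) = n - 1
        · intro h; exact absurd (Fin.ext (by simp [hv0])) h
        · intro _; exact Fin.ext (by simp; omega)
      have h1 := top_guard (by omega) hSdom h0
      obtain ⟨hne1, hne2⟩ := (hmemS _).1 h1
      have e1 : ¬ ((n - 2 : ℕ) = (v : ℕ)) := fun h => hne1 (Fin.ext (by simpa using h))
      have e2 : ¬ ((n - 2 : ℕ) = (w : ℕ)) := fun h => hne2 (Fin.ext (by simpa using h))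
      omega
    obtain ⟨xx, hxn, hxv, hxw, hadjx, hc1, hc2⟩ :=
      secure_choice hn v.isLt w.isLt hvw' h1S h2S
    set X : Fin n := ⟨xx, hxn⟩ with hXdef
    have hXS : X ∈ S := (hmemS X).2 ⟨fun h => hxv (by simpa [Fin.ext_iff] using h),
      fun h => hxw (by simpa [Fin.ext_iff] using h)⟩
    have hadjXv : (pathGraph n).Adj X v := by
      rw [pathGraph_adj]; simpa using hadjx
    have hvX : v ≠ X := fun h => by
      rw [Fin.ext_iff] at h; simp only [hXdef, Fin.val_mk] at h; omega
    have hwX : w ≠ X := fun h => by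
      rw [Fin.ext_iff] at h; simp only [hXdef, Fin.val_mk] at h; omega
    have hT'eq : insert v (S.erase X) = Finset.univ \ {w, X} :=
      move_pair hmemS hvw hvX hwX
    refine ⟨insert v (S.erase X), ⟨?_, ?_⟩, ⟨X, v, hXS, hv, hadjXv, rfl⟩,
      Finset.mem_insert_self _ _⟩
    · rw [hT'eq]
      exact dom_pair hn w X hwX hc1 hc2
    · rw [hT'eq, Finset.card_sdiff_of_subset (Finset.subset_univ _)]
      rw [Finset.card_insert_of_notMem (by simpa using hwX), Finset.card_singleton]
      simp
  · -- condition (3)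
    rintro S ⟨hSdom, hScard⟩ S' hS'dom hadj
    exact ⟨hS'dom, by rw [adj_card _ hadj, hScard]⟩
  · -- witness dominating
    refine dom_pair hn _ _ h02 (by simp) (by simp; omega)
  · -- witness card
    rw [Finset.card_sdiff_of_subset (Finset.subset_univ _), hcard2]
    simp
  · rw [Finset.card_sdiff_of_subset (Finset.subset_univ _), hcard2]
    simp

set_option maxHeartbeats 1000000 in
lemma lower {n : ℕ} (hn : 4 ≤ n) {S : Finset (Fin n)}
    (hS : AutDomSet (pathGraph n) S) : n - 2 ≤ S.card := by
  classical
  by_contra hcon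
  push_neg at hcon
  obtain ⟨F, hF, hSF⟩ := hS
  have hdom := hF.1 S hSF
  have hcardn : S.card ≤ n := by
    simpa using Finset.card_le_card (Finset.subset_univ S)
  have hcard3 : S.card + 3 ≤ n := by omega
  have p1 : n - 1 < n := by omega
  have p2 : n - 2 < n := by omega
  have p3 : n - 3 < n := by omega
  have p4 : n - 4 < n := by omega
  have hcs : Sᶜ.card = n - S.card := by
    rw [Finset.card_compl]; simp
  -- phase 1
  have hne1 : Sᶜ.Nonempty := Finset.card_pos.1 (by omega)
  obtain ⟨r1, hr1mem, hr1top⟩ : ∃ r ∈ Sᶜ, ∀ u ∈ Sᶜ, u ≤ r :=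
    ⟨Sᶜ.max' hne1, Finset.max'_mem _ _, fun u hu => Finset.le_max' _ _ hu⟩
  have hr1 : r1 ∉ S := Finset.mem_compl.1 hr1mem
  have hr1max : ∀ u : Fin n, u ∉ S → (u : ℕ) ≤ (r1 : ℕ) :=
    fun u hu => hr1top _ (Finset.mem_compl.2 hu)
  obtain ⟨T1, hT1F, hd1, hc1, -, -, htop1, -⟩ :=
    slide hF p1 (n - 1 - (r1 : ℕ)) (r1 : ℕ) S hSF hdom
      (by have := r1.isLt; omega) (by omega) (by simpa using hr1)
      (fun j hj h1 h2 => by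
        by_contra hj'
        have := hr1max _ hj'
        simp only [Fin.val_mk] at this
        omega)
      (fun h1 => by omega)
  clear hr1 hr1max hr1top hr1mem hne1 hcs hdom hSF hcon
  clear r1
  have hT1n1 : (⟨n - 1, p1⟩ : Fin n) ∉ T1 := htop1
  clear htop1
  have hT1n2 : (⟨n - 2, p2⟩ : Fin n) ∈ T1 := by
    have := top_guard (by omega) hd1 (by exact hT1n1)
    exact this
  have hcs1 : T1ᶜ.card = n - S.card := by
    rw [Finset.card_compl, hc1]; simp
  -- phase 2
  have hne2 : (T1ᶜ.erase ⟨n - 1, p1⟩).Nonempty := by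
    apply Finset.card_pos.1
    rw [Finset.card_erase_of_mem (Finset.mem_compl.2 hT1n1), hcs1]
    omega
  obtain ⟨r2, hr2mem, hr2top⟩ : ∃ r ∈ T1ᶜ.erase ⟨n - 1, p1⟩,
      ∀ u ∈ T1ᶜ.erase ⟨n - 1, p1⟩, u ≤ r :=
    ⟨_, Finset.max'_mem _ hne2, fun u hu => Finset.le_max' _ _ hu⟩
  have hr2T1 : r2 ∉ T1 := Finset.mem_compl.1 (Finset.mem_of_mem_erase hr2mem)
  have hr2ne : r2 ≠ ⟨n - 1, p1⟩ := Finset.ne_of_mem_erase hr2mem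
  have hr2max : ∀ u : Fin n, u ∉ T1 → u ≠ ⟨n - 1, p1⟩ → (u : ℕ) ≤ (r2 : ℕ) :=
    fun u hu hune => hr2top _ (Finset.mem_erase.2 ⟨hune, Finset.mem_compl.2 hu⟩)
  clear hr2top hr2mem hne2
  have hr2val : (r2 : ℕ) ≤ n - 3 := by
    have h1 : (r2 : ℕ) ≠ n - 1 := fun h => hr2ne (Fin.ext h)
    have h2 : (r2 : ℕ) ≠ n - 2 := fun h => hr2T1 ((Fin.ext h : r2 = ⟨n - 2, p2⟩) ▸ hT1n2)
    have := r2.isLt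
    omega
  obtain ⟨T2, hT2F, hd2, hc2, -, -, htop2, hhigh2⟩ :=
    slide hF p3 (n - 3 - (r2 : ℕ)) (r2 : ℕ) T1 hT1F hd1
      hr2val (by omega) (by simpa using hr2T1)
      (fun j hj h1 h2 => by
        by_contra hj'
        have := hr2max _ hj' (fun h => by
          rw [Fin.ext_iff] at h
          simp only [Fin.val_mk] at h
          omega)
        simp only [Fin.val_mk] at this
        omega)
      (fun h1 => Or.inl ⟨h1, by
        have he : (⟨n - 3 + 1, h1⟩ : Fin n) = ⟨n - 2, p2⟩ := Fin.ext (by simp; omega)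
        rw [he]; exact hT1n2⟩)
  clear hr2max hr2val hr2ne hr2T1
  clear r2
  have hc2' : T2.card = S.card := by rw [hc2, hc1]
  have hT2n3 : (⟨n - 3, p3⟩ : Fin n) ∉ T2 := htop2
  have hT2n2 : (⟨n - 2, p2⟩ : Fin n) ∈ T2 := by
    rw [hhigh2 (n - 2) p2 (by omega)]; exact hT1n2
  have hT2n1 : (⟨n - 1, p1⟩ : Fin n) ∉ T2 := by
    rw [hhigh2 (n - 1) p1 (by omega)]; exact hT1n1
  clear htop2 hhigh2 hT1n1 hT1n2 hcs1 hc1 hc2 hd1 hT1F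
  clear T1
  have hcs2 : T2ᶜ.card = n - S.card := by
    rw [Finset.card_compl, hc2']; simp
  -- phase 3
  have hne3 : ((T2ᶜ.erase ⟨n - 1, p1⟩).erase ⟨n - 3, p3⟩).Nonempty := by
    apply Finset.card_pos.1
    rw [Finset.card_erase_of_mem (Finset.mem_erase.2
        ⟨fun h => by rw [Fin.ext_iff] at h; simp only [Fin.val_mk] at h; omega,
         Finset.mem_compl.2 hT2n3⟩),
      Finset.card_erase_of_mem (Finset.mem_compl.2 hT2n1), hcs2]
    omega
  obtain ⟨r3, hr3mem, hr3top⟩ : ∃ r ∈ (T2ᶜ.erase ⟨n - 1, p1⟩).erase ⟨n - 3, p3⟩,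
      ∀ u ∈ (T2ᶜ.erase ⟨n - 1, p1⟩).erase ⟨n - 3, p3⟩, u ≤ r :=
    ⟨_, Finset.max'_mem _ hne3, fun u hu => Finset.le_max' _ _ hu⟩
  have hr3T2 : r3 ∉ T2 := Finset.mem_compl.1
    (Finset.mem_of_mem_erase (Finset.mem_of_mem_erase hr3mem))
  have hr3ne3 : r3 ≠ ⟨n - 3, p3⟩ := Finset.ne_of_mem_erase hr3mem
  have hr3ne1 : r3 ≠ ⟨n - 1, p1⟩ :=
    Finset.ne_of_mem_erase (Finset.mem_of_mem_erase hr3mem)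
  have hr3max : ∀ u : Fin n, u ∉ T2 → u ≠ ⟨n - 1, p1⟩ → u ≠ ⟨n - 3, p3⟩ →
      (u : ℕ) ≤ (r3 : ℕ) :=
    fun u hu h1 h3 => hr3top _ (Finset.mem_erase.2
      ⟨h3, Finset.mem_erase.2 ⟨h1, Finset.mem_compl.2 hu⟩⟩)
  clear hr3top hr3mem hne3 hcs2
  have hr3val : (r3 : ℕ) ≤ n - 4 := by
    have h1 : (r3 : ℕ) ≠ n - 1 := fun h => hr3ne1 (Fin.ext h)
    have h3 : (r3 : ℕ) ≠ n - 3 := fun h => hr3ne3 (Fin.ext h)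
    have h2 : (r3 : ℕ) ≠ n - 2 := fun h => hr3T2 ((Fin.ext h : r3 = ⟨n - 2, p2⟩) ▸ hT2n2)
    have := r3.isLt
    omega
  obtain ⟨T3, hT3F, hd3, -, -, -, htop3, hhigh3⟩ :=
    slide hF p4 (n - 4 - (r3 : ℕ)) (r3 : ℕ) T2 hT2F hd2
      hr3val (by omega) (by simpa using hr3T2)
      (fun j hj h1 h2 => by
        by_contra hj'
        have := hr3max _ hj'
          (fun h => by rw [Fin.ext_iff] at h; simp only [Fin.val_mk] at h; omega)
          (fun h => by rw [Fin.ext_iff] at h; simp only [Fin.val_mk] at h; omega)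
        simp only [Fin.val_mk] at this
        omega)
      (fun h1 => Or.inr ⟨by omega, by
        have he : (⟨n - 4 + 2, by omega⟩ : Fin n) = ⟨n - 2, p2⟩ := Fin.ext (by simp; omega)
        rw [he]; exact hT2n2⟩)
  clear hr3max hr3val hr3ne1 hr3ne3 hr3T2
  clear r3
  -- facts about T3
  have hT3n4 : (⟨n - 4, p4⟩ : Fin n) ∉ T3 := htop3
  have hT3n3 : (⟨n - 3, p3⟩ : Fin n) ∉ T3 := fun h => hT2n3
    ((hhigh3 (n - 3) p3 (by omega)).1 h)
  have hT3n2 : (⟨n - 2, p2⟩ : Fin n) ∈ T3 := by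
    rw [hhigh3 (n - 2) p2 (by omega)]; exact hT2n2
  have hT3n1 : (⟨n - 1, p1⟩ : Fin n) ∉ T3 := fun h => hT2n1
    ((hhigh3 (n - 1) p1 (by omega)).1 h)
  clear htop3 hhigh3 hT2n1 hT2n2 hT2n3 hd2 hT2F hc2'
  clear T2
  -- the attack on n - 1
  obtain ⟨T', hT'F, ⟨a, b, haT3, hbT3, hab, hT'eq⟩, hvT'⟩ :=
    hF.2.1 T3 hT3F ⟨n - 1, p1⟩ hT3n1
  have hb : b = ⟨n - 1, p1⟩ := by
    rcases Finset.mem_insert.1 (hT'eq ▸ hvT') with h | h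
    · exact h.symm
    · exact absurd (Finset.mem_of_mem_erase h) hT3n1
  subst hb
  have ha : a = ⟨n - 2, p2⟩ := by
    rw [pathGraph_adj] at hab
    simp only [Fin.val_mk] at hab
    apply Fin.ext
    simp only [Fin.val_mk]
    have := a.isLt
    omega
  subst ha
  have hdomT' := hF.1 T' hT'F
  have hn3T' : (⟨n - 3, p3⟩ : Fin n) ∉ T' := by
    rw [hT'eq]
    intro h
    rcases Finset.mem_insert.1 h with h | h
    · rw [Fin.ext_iff] at h; simp only [Fin.val_mk] at h; omega
    · exact hT3n3 (Finset.mem_of_mem_erase h)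
  rcases hdomT' ⟨n - 3, p3⟩ with h | ⟨u, hu, hadj⟩
  · exact hn3T' h
  · rw [pathGraph_adj] at hadj
    simp only [Fin.val_mk] at hadj
    rw [hT'eq] at hu
    rcases Finset.mem_insert.1 hu with h | h
    · have hu1 : (u : ℕ) = n - 1 := by rw [h]
      omega
    · have hune := Finset.ne_of_mem_erase h
      have huT3 := Finset.mem_of_mem_erase h
      have hu2 : (u : ℕ) ≠ n - 2 := fun hh => hune (Fin.ext hh)
      have hu4 : (u : ℕ) = n - 4 := by omega
      exact hT3n4 ((Fin.ext hu4 : u = ⟨n - 4, p4⟩) ▸ huT3)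

/-- the autonomous domination number of the path `P_n` is `n - 2`
for `n ≥ 4`. -/
theorem autDomNum_pathGraph (n : ℕ) (hn : 4 ≤ n) :
    autDomNum (SimpleGraph.pathGraph n) = n - 2 := by
  obtain ⟨S₀, hS₀, hc₀⟩ := upper n hn
  have hmem : (n - 2) ∈ {k | ∃ S : Finset (Fin n),
      AutDomSet (SimpleGraph.pathGraph n) S ∧ S.card = k} := ⟨S₀, hS₀, hc₀⟩
  unfold autDomNum
  refine le_antisymm (Nat.sInf_le hmem) (le_csInf ⟨_, hmem⟩ ?_)
  rintro k ⟨S, hS, rfl⟩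
  exact lower hn hS
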